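/- Assume each model set K_0, …, K_T is nonempty and symmetric. Then for every coefficient vector a = (a_0,…,a_T) ∈ ℝ^{m_0} × ⋯ × ℝ^{m_T}, the global worst-case error of the linear recovery map Δ_a satisfies gwce(Δ_a) = sup_{g_0 ∈ K_0} |(Q − Σ_{t=0}^T Σ_{i=1}^{m_t} a_{t,i} λ_{t,i})(g_0)| + Σ_{s=1}^T sup_{g_s ∈ K_s} |(Σ_{t=s}^T Σ_{i=1}^{m_t} a_{t,i} λ_{t,i})(g_s)|, both sides being taken in the extended nonnegative reals [0,∞]. -/

import Mathlib

open scoped ENNReal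
open Finset

lemma aux_sum_biSup_le {ι : Type*} [DecidableEq ι] {F : Type*} (K : ι → Set F)
    (hK : ∀ s, (K s).Nonempty) (h : ι → F → ℝ≥0∞) (A : Finset ι) :
    ∑ s ∈ A, ⨆ x ∈ K s, h s x ≤
      ⨆ g ∈ {g : ι → F | ∀ s, g s ∈ K s}, ∑ s ∈ A, h s (g s) := by
  classical
  have hP : ∃ g : ι → F, g ∈ {g : ι → F | ∀ s, g s ∈ K s} :=
    ⟨fun s => (hK s).some, fun s => (hK s).some_mem⟩
  induction A using Finset.induction_on with
  | empty => simp
  | insert _ _ hs ih =>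
    rename_i s A
    rw [Finset.sum_insert hs]
    refine le_trans (add_le_add_right ih _) ?_
    rw [iSup_subtype', iSup_subtype', iSup_subtype']
    have : Nonempty (K s) := ⟨⟨(hK s).some, (hK s).some_mem⟩⟩
    have : Nonempty {g : ι → F // g ∈ {g : ι → F | ∀ s, g s ∈ K s}} := ⟨⟨hP.choose, hP.choose_spec⟩⟩
    apply ENNReal.iSup_add_iSup_le
    intro x g
    have hg' : Function.update (g : ι → F) s (x : F) ∈ {g : ι → F | ∀ s, g s ∈ K s} := by
      intro u
      by_cases hu : u = s
      · subst hu; simpa using x.2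
      · simpa [Function.update_of_ne hu] using g.2 u
    refine le_trans (le_of_eq ?_)
      (le_iSup (fun g' : {g : ι → F // g ∈ {g : ι → F | ∀ s, g s ∈ K s}} =>
        ∑ u ∈ insert s A, h u ((g' : ι → F) u)) ⟨_, hg'⟩)
    rw [Finset.sum_insert hs]
    simp only [Function.update_self]
    congr 1
    exact Finset.sum_congr rfl fun u hu => by
      rw [Function.update_of_ne (by rintro rfl; exact hs hu)]

lemma aux_decouple {F : Type*} [NormedAddCommGroup F] [NormedSpace ℝ F]
    {ι : Type*} [Fintype ι] [DecidableEq ι]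
    (K : ι → Set F) (hKne : ∀ s, (K s).Nonempty) (hKsym : ∀ s, K s = -K s)
    (L : ι → F →L[ℝ] ℝ) :
    (⨆ g ∈ {g : ι → F | ∀ s, g s ∈ K s}, ENNReal.ofReal |∑ s, L s (g s)|) =
      ∑ s, ⨆ x ∈ K s, ENNReal.ofReal |L s x| := by
  classical
  apply le_antisymm
  · refine iSup₂_le fun g hg => ?_
    calc ENNReal.ofReal |∑ s, L s (g s)|
        ≤ ENNReal.ofReal (∑ s, |L s (g s)|) :=
          ENNReal.ofReal_le_ofReal (Finset.abs_sum_le_sum_abs _ _)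
      _ = ∑ s, ENNReal.ofReal |L s (g s)| :=
          ENNReal.ofReal_sum_of_nonneg fun i _ => abs_nonneg _
      _ ≤ ∑ s : ι, ⨆ x ∈ K s, ENNReal.ofReal |L s x| :=
          Finset.sum_le_sum fun s _ => le_iSup₂ (f := fun x (_ : x ∈ K s) =>
            ENNReal.ofReal |L s x|) (g s) (hg s)
  · refine le_trans (aux_sum_biSup_le K hKne _ _) (iSup₂_le fun g hg => ?_)
    set y : ι → F := fun s => if 0 ≤ L s (g s) then g s else -(g s) with hy
    have hyK : ∀ s, y s ∈ K s := by
      intro s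
      by_cases h : 0 ≤ L s (g s)
      · simp only [hy, if_pos h]; exact hg s
      · simp only [hy, if_neg h]
        rw [hKsym s]
        exact Set.neg_mem_neg.mpr (hg s)
    have hyL : ∀ s, L s (y s) = |L s (g s)| := by
      intro s
      by_cases h : 0 ≤ L s (g s)
      · simp [hy, if_pos h, abs_of_nonneg h]
      · simp [hy, if_neg h, abs_of_neg (lt_of_not_ge h)]
    calc ∑ s : ι, ENNReal.ofReal |L s (g s)|
        = ∑ s : ι, ENNReal.ofReal (L s (y s)) := by simp_rw [hyL]
      _ = ENNReal.ofReal (∑ s, L s (y s)) :=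
          (ENNReal.ofReal_sum_of_nonneg fun s _ => (hyL s).symm ▸ abs_nonneg _).symm
      _ = ENNReal.ofReal |∑ s, L s (y s)| := by
          rw [abs_of_nonneg (Finset.sum_nonneg fun s _ => (hyL s).symm ▸ abs_nonneg _)]
      _ ≤ _ := le_iSup₂ (f := fun g (_ : g ∈ {g : ι → F | ∀ s, g s ∈ K s}) =>
          ENNReal.ofReal |∑ s, L s (g s)|) y hyK
/-- For symmetric nonempty model sets `K 0, …, K T`, the global worst-case
error of the linear recovery map `Δ_a` equals the decoupled sum of suprema. -/
theorem statement0
    {F : Type*} [NormedAddCommGroup F] [NormedSpace ℝ F] [CompleteSpace F]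
    (T : ℕ) (m : Fin (T + 1) → ℕ)
    (K : Fin (T + 1) → Set F)
    (lam : (t : Fin (T + 1)) → Fin (m t) → F →L[ℝ] ℝ)
    (Q : F →L[ℝ] ℝ)
    (hKne : ∀ t, (K t).Nonempty)
    (hKsym : ∀ t, K t = -K t)
    (a : (t : Fin (T + 1)) → Fin (m t) → ℝ) :
    (⨆ f ∈ {f : Fin (T + 1) → F |
        f 0 ∈ K 0 ∧ ∀ t : Fin T, f t.castSucc - f t.succ ∈ K t.succ},
      ENNReal.ofReal
        |Q (f 0) - ∑ t, ∑ i, a t i * lam t i (f t)|) =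
    (⨆ g ∈ K 0, ENNReal.ofReal |(Q - ∑ t, ∑ i, a t i • lam t i) g|) +
      ∑ s ∈ Finset.univ.filter (fun s : Fin (T + 1) => s ≠ 0),
        ⨆ g ∈ K s, ENNReal.ofReal
          |(∑ t ∈ Finset.univ.filter (fun t => s ≤ t), ∑ i, a t i • lam t i) g| := by
  classical
  set c : Fin (T + 1) → F →L[ℝ] ℝ := fun t => ∑ i, a t i • lam t i with hc
  set S : Fin (T + 1) → F →L[ℝ] ℝ :=
    (fun s => ∑ t ∈ Finset.univ.filter (fun t => s ≤ t), c t) with hS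
  set L : Fin (T + 1) → F →L[ℝ] ℝ := (fun s => if s = 0 then Q - S 0 else S s) with hL
  set D : Fin (T + 1) → Finset (Fin (T + 1)) :=
    (fun t => Finset.univ.filter (fun s => s ≤ t ∧ s ≠ 0)) with hD
  set fg : (Fin (T + 1) → F) → Fin (T + 1) → F := (fun g t => g 0 - ∑ s ∈ D t, g s) with hfg
  have happ : ∀ (x : F) t, c t x = ∑ i, a t i * lam t i x := by
    intro x t
    simp [hc, ContinuousLinearMap.sum_apply]
  have hD0 : D 0 = ∅ := by
    ext s; simp [hD, Fin.le_zero_iff]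
  have hnot : ∀ t : Fin T, t.succ ∉ D t.castSucc := by
    intro t
    simp only [hD, Finset.mem_filter, Finset.mem_univ, true_and, Fin.le_def,
      Fin.val_succ, Fin.coe_castSucc, not_and]
    omega
  have hDins : ∀ t : Fin T, D t.succ = insert t.succ (D t.castSucc) := by
    intro t
    ext s
    simp only [hD, Finset.mem_filter, Finset.mem_univ, true_and, Finset.mem_insert,
      Fin.le_def, ne_eq, Fin.ext_iff, Fin.val_succ, Fin.coe_castSucc, Fin.val_zero]
    omega
  have hS0 : S 0 = ∑ t, c t := by
    rw [hS]
    simp only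
    congr 1
    ext t
    simp [Fin.zero_le]
  -- the key algebraic identity
  have hid : ∀ g : Fin (T + 1) → F,
      Q (fg g 0) - ∑ t, ∑ i, a t i * lam t i (fg g t) = ∑ s, L s (g s) := by
    intro g
    have h1 : ∑ t, ∑ i, a t i * lam t i (fg g t) = ∑ t, c t (fg g t) := by
      simp_rw [happ]
    have h2 : ∀ t, c t (fg g t) = c t (g 0) - ∑ s ∈ D t, c t (g s) := by
      intro t; simp [hfg, map_sub, map_sum]
    have h3 : ∑ t, c t (g 0) = S 0 (g 0) := by
      rw [hS0]; simp [ContinuousLinearMap.sum_apply]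
    have h4 : ∑ t, ∑ s ∈ D t, c t (g s)
        = ∑ s ∈ Finset.univ.filter (fun s : Fin (T + 1) => s ≠ 0), S s (g s) := by
      rw [Finset.sum_comm' (t' := Finset.univ.filter (fun s : Fin (T + 1) => s ≠ 0))
        (s' := fun s => Finset.univ.filter (fun t => s ≤ t)) ?_]
      · refine Finset.sum_congr rfl fun s _ => ?_
        simp [hS, ContinuousLinearMap.sum_apply]
      · intro t s; simp [hD]
    have h5 : ∑ s, L s (g s)
        = L 0 (g 0) + ∑ s ∈ Finset.univ.filter (fun s : Fin (T + 1) => s ≠ 0), L s (g s) := by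
      rw [← Finset.sum_filter_add_sum_filter_not Finset.univ (fun s : Fin (T + 1) => s = 0)]
      congr 1
      have he : Finset.univ.filter (fun s : Fin (T + 1) => s = 0) = {0} := by
        ext s; simp
      rw [he, Finset.sum_singleton]
    have h6 : ∀ s ∈ Finset.univ.filter (fun s : Fin (T + 1) => s ≠ 0), L s (g s) = S s (g s) := by
      intro s hs
      simp only [Finset.mem_filter] at hs
      simp [hL, if_neg hs.2]
    have h7 : fg g 0 = g 0 := by simp [hfg, hD0]
    rw [h1, h7, h5, Finset.sum_congr rfl h6]
    simp_rw [h2]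
    rw [Finset.sum_sub_distrib, h3]
    rw [h4]
    simp only [hL, if_pos rfl, ContinuousLinearMap.sub_apply]
    ring
  -- change of variables between the two admissible sets
  have hcov : (⨆ f ∈ {f : Fin (T + 1) → F |
        f 0 ∈ K 0 ∧ ∀ t : Fin T, f t.castSucc - f t.succ ∈ K t.succ},
      ENNReal.ofReal |Q (f 0) - ∑ t, ∑ i, a t i * lam t i (f t)|)
      = ⨆ g ∈ {g : Fin (T + 1) → F | ∀ s, g s ∈ K s},
          ENNReal.ofReal |∑ s, L s (g s)| := by
    apply le_antisymm
    · refine iSup₂_le fun f hf => ?_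
      obtain ⟨hf0, hfs⟩ := hf
      set g : Fin (T + 1) → F :=
        Fin.cases (f 0) (fun t => f t.castSucc - f t.succ) with hg
      have hgP : g ∈ {g : Fin (T + 1) → F | ∀ s, g s ∈ K s} := by
        intro s
        induction s using Fin.cases with
        | zero => simpa [hg] using hf0
        | succ t => simpa [hg] using hfs t
      have hfgf : ∀ t, fg g t = f t := by
        intro t
        induction t using Fin.induction with
        | zero => simp [hfg, hD0, hg]
        | succ t ih =>
          rw [hfg] at ih ⊢
          simp only at ih ⊢
          rw [hDins t, Finset.sum_insert (hnot t), sub_add_eq_sub_sub, sub_right_comm, ih]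
          simp [hg]
      have hval := hid g
      rw [show fg g = f from funext hfgf] at hval
      rw [hval]
      exact le_iSup₂ (f := fun g' (_ : g' ∈ {g : Fin (T + 1) → F | ∀ s, g s ∈ K s}) =>
        ENNReal.ofReal |∑ s, L s (g' s)|) g hgP
    · refine iSup₂_le fun g hg => ?_
      have hf0 : fg g 0 = g 0 := by simp [hfg, hD0]
      have hstep : ∀ t : Fin T, fg g t.castSucc - fg g t.succ = g t.succ := by
        intro t
        rw [hfg]
        simp only
        rw [hDins t, Finset.sum_insert (hnot t)]
        abel
      have hadm : fg g ∈ {f : Fin (T + 1) → F |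
          f 0 ∈ K 0 ∧ ∀ t : Fin T, f t.castSucc - f t.succ ∈ K t.succ} := by
        refine ⟨by rw [hf0]; exact hg 0, fun t => by rw [hstep t]; exact hg t.succ⟩
      refine le_trans (le_of_eq ?_) (le_iSup₂ (f := fun f (_ : f ∈ {f : Fin (T + 1) → F |
          f 0 ∈ K 0 ∧ ∀ t : Fin T, f t.castSucc - f t.succ ∈ K t.succ}) =>
        ENNReal.ofReal |Q (f 0) - ∑ t, ∑ i, a t i * lam t i (f t)|) (fg g) hadm)
      rw [hid g]
  rw [hcov, aux_decouple K hKne hKsym L]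
  rw [← Finset.sum_filter_add_sum_filter_not Finset.univ (fun s : Fin (T + 1) => s = 0)
    (fun s => ⨆ x ∈ K s, ENNReal.ofReal |L s x|)]
  congr 1
  · have he : Finset.univ.filter (fun s : Fin (T + 1) => s = 0) = {0} := by
      ext s; simp
    rw [he, Finset.sum_singleton]
    have : L 0 = Q - ∑ t, c t := by rw [hL]; simp [hS0]
    rw [this]
  · refine Finset.sum_congr (by ext s; simp) fun s hs => ?_
    simp only [Finset.mem_filter] at hs
    have : L s = S s := by rw [hL]; simp [hs.2]
    rw [this, hS]
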